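/- arXiv:1412.7670 — 2 statements merged into one kernel-verified Lean document; each statement's English description precedes it below -/
import Mathlib

section
/- Let ε ∈ (0,1/2) and n ∈ ℕ. Then a shortest path between two vertices of the weighted diamond W_n contains, for each k ≥ 1, at most two edges of length (1/2+ε)^k, and at most one edge of length 1; moreover, if it contains two edges of the maximal edge-length occurring in the path, these two edges are adjacent (share an endpoint). -/
noncomputable section

open scoped ENNReal Classical

namespace Stmt

/-- Vertex set together with the (oriented) edge relation of the diamond graph `D n`. -/
def VE : ℕ → (V : Type) × (V → V → Prop)
  | 0 => ⟨Fin 2, fun u v => u = 0 ∧ v = 1⟩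
  | n + 1 =>
      ⟨(VE n).1 ⊕ ({e : (VE n).1 × (VE n).1 // (VE n).2 e.1 e.2} × Bool),
        fun u v =>
          ∃ (e : {e : (VE n).1 × (VE n).1 // (VE n).2 e.1 e.2}) (b : Bool),
            (u = Sum.inl e.1.1 ∧ v = Sum.inr (e, b)) ∨
            (u = Sum.inr (e, b) ∧ v = Sum.inl e.1.2)⟩

/-- Vertices of the diamond graph `D n` (equivalently, of the weighted diamond `W n`). -/
def Vert (n : ℕ) : Type := (VE n).1

/-- The (oriented) edge relation of the diamond graph `D n`. -/
def dEdge (n : ℕ) : Vert n → Vert n → Prop := (VE n).2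

/-- The edges of generation `k` inside the vertex set of `D n`: the edges of `D k`,
transported to `Vert n` via the canonical inclusions.  These are the edges of the
weighted diamond `W n`, which get weight `(1/2 + ε) ^ k`. -/
def edgeAt : (n : ℕ) → (k : ℕ) → Vert n → Vert n → Prop
  | 0, k => fun u v => k = 0 ∧ dEdge 0 u v
  | n + 1, k => fun u v =>
      (k = n + 1 ∧ dEdge (n + 1) u v) ∨
      (∃ u' v' : Vert n, u = Sum.inl u' ∧ v = Sum.inl v' ∧ edgeAt n k u' v')

/-- Edge weights of the weighted diamond `W n`:  the value is `(1/2 + ε) ^ k` if `{u, v}`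
is an edge of generation `k`, and `∞` if `{u, v}` is not an edge of `W n`. -/
def wCost (ε : ℝ) (n : ℕ) (u v : Vert n) : ℝ≥0∞ :=
  ⨅ (k : ℕ) (_ : edgeAt n k u v ∨ edgeAt n k v u), ENNReal.ofReal ((1 / 2 + ε) ^ k)

/-- Total weight of a walk, recorded as the list of visited vertices. -/
def walkCost {V : Type*} (c : V → V → ℝ≥0∞) : List V → ℝ≥0∞
  | [] => 0
  | [_] => 0
  | u :: v :: l => c u v + walkCost c (v :: l)

/-- The shortest-path (extended) distance associated to an edge-weight function `c`. -/
def spDist {V : Type*} (c : V → V → ℝ≥0∞) (u v : V) : ℝ≥0∞ :=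
  ⨅ p : { l : List V // l.head? = some u ∧ l.getLast? = some v }, walkCost c p.1

/-- The shortest-path metric `d_{W_n}` of the weighted diamond `W n` (with parameter `ε`). -/
def dW (ε : ℝ) (n : ℕ) (u v : Vert n) : ℝ :=
  (spDist (wCost ε n) u v).toReal

/-- `embedsM K dV dY` : there is a map of distortion at most `K` from the space with distance
function `dV` to the space with distance function `dY`. -/
def embedsM {V Y : Type*} (K : ℝ) (dV : V → V → ℝ) (dY : Y → Y → ℝ) : Prop :=
  ∃ f : V → Y, Function.Injective f ∧ ∃ r : ℝ, 0 < r ∧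
    ∀ a b, r * dV a b ≤ dY (f a) (f b) ∧ dY (f a) (f b) ≤ K * (r * dV a b)
/-! ### Weights -/
section Weights
variable {ε : ℝ}

def Wt (ε : ℝ) (k : ℕ) : ℝ≥0∞ := ENNReal.ofReal ((1 / 2 + ε) ^ k)

lemma q_pos (hε0 : 0 < ε) : (0:ℝ) < 1 / 2 + ε := by linarith

lemma Wt_pos (hε0 : 0 < ε) (k : ℕ) : 0 < Wt ε k :=
  ENNReal.ofReal_pos.2 (pow_pos (q_pos hε0) k)

lemma Wt_ne_zero (hε0 : 0 < ε) (k : ℕ) : Wt ε k ≠ 0 := (Wt_pos hε0 k).ne'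

lemma Wt_ne_top (k : ℕ) : Wt ε k ≠ ⊤ := ENNReal.ofReal_ne_top

lemma Wt_lt (hε0 : 0 < ε) (hε : ε < 1/2) {j k : ℕ} (h : j < k) : Wt ε k < Wt ε j := by
  have h1 : (0:ℝ) < 1 / 2 + ε := q_pos hε0
  have h2 : (1:ℝ)/2 + ε < 1 := by linarith
  have := pow_lt_pow_right_of_lt_one₀ h1 h2 h
  exact (ENNReal.ofReal_lt_ofReal_iff (pow_pos h1 j)).2 this

lemma Wt_le (hε0 : 0 < ε) (hε : ε < 1/2) {j k : ℕ} (h : j ≤ k) : Wt ε k ≤ Wt ε j := by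
  rcases h.lt_or_eq with h | rfl
  · exact (Wt_lt hε0 hε h).le
  · exact le_rfl

lemma Wt_inj (hε0 : 0 < ε) (hε : ε < 1/2) {j k : ℕ} (h : Wt ε j = Wt ε k) : j = k := by
  rcases lt_trichotomy j k with hlt | he | hlt
  · exact absurd h (Wt_lt hε0 hε hlt).ne'
  · exact he
  · exact absurd h (Wt_lt hε0 hε hlt).ne

lemma Wt_split (hε0 : 0 < ε) (n : ℕ) : Wt ε n < Wt ε (n+1) + Wt ε (n+1) := by
  have h1 : (0:ℝ) < 1 / 2 + ε := q_pos hε0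
  have hp : (0:ℝ) ≤ (1/2 + ε) ^ (n+1) := (pow_pos h1 (n+1)).le
  rw [Wt, Wt, ← ENNReal.ofReal_add hp hp]
  apply (ENNReal.ofReal_lt_ofReal_iff (by positivity)).2
  have : (1/2 + ε) ^ (n+1) = (1/2 + ε) * (1/2+ε)^n := by ring
  rw [this]
  nlinarith [pow_pos h1 n]

end Weights
/-! ### Graph structure lemmas -/

abbrev Edg (n : ℕ) := {e : Vert n × Vert n // dEdge n e.1 e.2}

lemma sum_cases {n : ℕ} (v : Vert (n+1)) :
    (∃ u : Vert n, v = Sum.inl u) ∨ (∃ z : Edg n × Bool, v = Sum.inr z) := by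
  rcases (v : Vert n ⊕ (Edg n × Bool)) with u | z
  · exact Or.inl ⟨u, rfl⟩
  · exact Or.inr ⟨z, rfl⟩

lemma dEdge_zero {u v : Vert 0} : dEdge 0 u v ↔ (u = (0 : Fin 2) ∧ v = (1 : Fin 2)) := Iff.rfl

lemma dEdge_succ {n : ℕ} {u v : Vert (n+1)} : dEdge (n+1) u v ↔
    ∃ (e : Edg n) (b : Bool),
      (u = Sum.inl e.1.1 ∧ v = Sum.inr (e, b)) ∨
      (u = Sum.inr (e, b) ∧ v = Sum.inl e.1.2) := Iff.rfl

lemma edgeAt_zero_lvl {k : ℕ} {u v : Vert 0} : edgeAt 0 k u v ↔ k = 0 ∧ dEdge 0 u v := Iff.rfl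

lemma edgeAt_succ {n k : ℕ} {u v : Vert (n+1)} : edgeAt (n+1) k u v ↔
    (k = n + 1 ∧ dEdge (n + 1) u v) ∨
    (∃ u' v' : Vert n, u = Sum.inl u' ∧ v = Sum.inl v' ∧ edgeAt n k u' v') := Iff.rfl

lemma edgeAt_le : ∀ (n : ℕ) {k : ℕ} {u v : Vert n}, edgeAt n k u v → k ≤ n := by
  intro n
  induction n with
  | zero => intro k u v h; exact h.1.le
  | succ n ih =>
    intro k u v h
    rcases edgeAt_succ.1 h with ⟨rfl, _⟩ | ⟨u', v', _, _, h⟩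
    · exact le_rfl
    · exact (ih h).trans (Nat.le_succ n)

lemma edgeAt_succ_inl_inl {n k : ℕ} {u v : Vert n} :
    edgeAt (n+1) k (Sum.inl u) (Sum.inl v) ↔ edgeAt n k u v := by
  erw [edgeAt_succ]
  constructor
  · rintro (⟨rfl, h⟩ | ⟨u', v', hu, hv, h⟩)
    · rcases dEdge_succ.1 h with ⟨e, b, ⟨_, hv⟩ | ⟨hu, _⟩⟩
      · exact absurd hv (by simp)
      · exact absurd hu (by simp)
    · rwa [Sum.inl.inj hu, Sum.inl.inj hv]
  · intro h; exact Or.inr ⟨u, v, rfl, rfl, h⟩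

lemma edgeAt_succ_inl_inr {n k : ℕ} {u : Vert n} {z : Edg n × Bool} :
    edgeAt (n+1) k (Sum.inl u) (Sum.inr z) ↔ k = n + 1 ∧ u = z.1.1.1 := by
  erw [edgeAt_succ]
  constructor
  · rintro (⟨rfl, h⟩ | ⟨u', v', _, hv, _⟩)
    · rcases dEdge_succ.1 h with ⟨e, b, ⟨hu, hv⟩ | ⟨hu, _⟩⟩
      · refine ⟨rfl, ?_⟩
        have hz : z = (e, b) := Sum.inr.inj hv
        rw [Sum.inl.inj hu, hz]
      · exact absurd hu (by simp)
    · exact absurd hv (by simp)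
  · rintro ⟨rfl, rfl⟩
    exact Or.inl ⟨rfl, dEdge_succ.2 ⟨z.1, z.2, Or.inl ⟨rfl, rfl⟩⟩⟩

lemma edgeAt_succ_inr_inl {n k : ℕ} {v : Vert n} {z : Edg n × Bool} :
    edgeAt (n+1) k (Sum.inr z) (Sum.inl v) ↔ k = n + 1 ∧ v = z.1.1.2 := by
  erw [edgeAt_succ]
  constructor
  · rintro (⟨rfl, h⟩ | ⟨u', v', hu, _, _⟩)
    · rcases dEdge_succ.1 h with ⟨e, b, ⟨hu, _⟩ | ⟨hu, hv⟩⟩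
      · exact absurd hu (by simp)
      · refine ⟨rfl, ?_⟩
        have hz : z = (e, b) := Sum.inr.inj hu
        rw [Sum.inl.inj hv, hz]
    · exact absurd hu (by simp)
  · rintro ⟨rfl, rfl⟩
    exact Or.inl ⟨rfl, dEdge_succ.2 ⟨z.1, z.2, Or.inr ⟨rfl, rfl⟩⟩⟩

lemma edgeAt_succ_inr_inr {n k : ℕ} {z z' : Edg n × Bool} :
    ¬ edgeAt (n+1) k (Sum.inr z) (Sum.inr z') := by
  erw [edgeAt_succ]
  rintro (⟨rfl, h⟩ | ⟨u', v', hu, _, _⟩)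
  · rcases dEdge_succ.1 h with ⟨e, b, ⟨hu, _⟩ | ⟨_, hv⟩⟩
    · exact absurd hu (by simp)
    · exact absurd hv (by simp)
  · exact absurd hu (by simp)

lemma edgeAt_of_dEdge : ∀ (n : ℕ) {u v : Vert n}, dEdge n u v → edgeAt n n u v := by
  intro n
  induction n with
  | zero => intro u v h; exact ⟨rfl, h⟩
  | succ n _ => intro u v h; exact Or.inl ⟨rfl, h⟩

/-- uniqueness of the generation of an (unoriented) edge -/
lemma cond_uniq : ∀ (n : ℕ) {k j : ℕ} {u v : Vert n},
    (edgeAt n k u v ∨ edgeAt n k v u) → (edgeAt n j u v ∨ edgeAt n j v u) → k = j := by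
  intro n
  induction n with
  | zero =>
    rintro k j u v (h | h) (h' | h') <;> rw [h.1, h'.1]
  | succ n ih =>
    intro k j u v hk hj
    rcases sum_cases u with ⟨u', rfl⟩ | ⟨z, rfl⟩
    · rcases sum_cases v with ⟨v', rfl⟩ | ⟨w, rfl⟩
      · exact ih (hk.imp edgeAt_succ_inl_inl.1 edgeAt_succ_inl_inl.1)
          (hj.imp edgeAt_succ_inl_inl.1 edgeAt_succ_inl_inl.1)
      · replace hk := hk.imp edgeAt_succ_inl_inr.1 edgeAt_succ_inr_inl.1
        replace hj := hj.imp edgeAt_succ_inl_inr.1 edgeAt_succ_inr_inl.1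
        rcases hk with h | h <;> rcases hj with h' | h' <;> rw [h.1, h'.1]
    · rcases sum_cases v with ⟨v', rfl⟩ | ⟨w, rfl⟩
      · replace hk := hk.imp edgeAt_succ_inr_inl.1 edgeAt_succ_inl_inr.1
        replace hj := hj.imp edgeAt_succ_inr_inl.1 edgeAt_succ_inl_inr.1
        rcases hk with h | h <;> rcases hj with h' | h' <;> rw [h.1, h'.1]
      · rcases hk with h | h <;> exact absurd h edgeAt_succ_inr_inr

/-- the unique generation-0 edge -/
def bot0 : (n : ℕ) → Vert n
  | 0 => (0 : Fin 2)
  | n + 1 => Sum.inl (bot0 n)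

def bot1 : (n : ℕ) → Vert n
  | 0 => (1 : Fin 2)
  | n + 1 => Sum.inl (bot1 n)

lemma bot_ne : ∀ n, bot0 n ≠ bot1 n := by
  intro n
  induction n with
  | zero => exact fun h => absurd (congrArg (fun x : Fin 2 => x.1) h) (by simp [bot0, bot1])
  | succ n ih => exact fun h => ih (Sum.inl.inj h)

lemma edgeAt_zero_iff : ∀ (n : ℕ) {u v : Vert n}, edgeAt n 0 u v ↔ u = bot0 n ∧ v = bot1 n := by
  intro n
  induction n with
  | zero =>
    intro u v
    constructor
    · rintro ⟨-, h⟩; exact dEdge_zero.1 h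
    · rintro ⟨hu, hv⟩; exact ⟨rfl, dEdge_zero.2 ⟨hu, hv⟩⟩
  | succ n ih =>
    intro u v
    rw [edgeAt_succ]
    constructor
    · rintro (⟨h, -⟩ | ⟨u', v', rfl, rfl, h⟩)
      · omega
      · rcases ih.1 h with ⟨rfl, rfl⟩; exact ⟨rfl, rfl⟩
    · rintro ⟨rfl, rfl⟩
      exact Or.inr ⟨bot0 n, bot1 n, rfl, rfl, ih.2 ⟨rfl, rfl⟩⟩

lemma vert0_cases (v : Vert 0) : v = (0 : Fin 2) ∨ v = (1 : Fin 2) := by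
  have hv : (show Fin 2 from v).val < 2 := (show Fin 2 from v).isLt
  have h01 : (show Fin 2 from v).val = 0 ∨ (show Fin 2 from v).val = 1 := by omega
  rcases h01 with h | h
  · exact Or.inl (Fin.ext h)
  · exact Or.inr (Fin.ext h)
/-! ### wCost lemmas -/
section WCost
variable {ε : ℝ}

lemma wCost_eq_iInf (n : ℕ) (u v : Vert n) :
    wCost ε n u v = ⨅ (k : ℕ) (_ : edgeAt n k u v ∨ edgeAt n k v u), Wt ε k := rfl

lemma wCost_comm (n : ℕ) (u v : Vert n) : wCost ε n u v = wCost ε n v u := by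
  rw [wCost_eq_iInf, wCost_eq_iInf]
  exact iInf_congr fun k => by rw [or_comm]

lemma wCost_eq_of_cond {n k : ℕ} {u v : Vert n} (h : edgeAt n k u v ∨ edgeAt n k v u) :
    wCost ε n u v = Wt ε k := by
  rw [wCost_eq_iInf]
  apply le_antisymm
  · exact iInf₂_le k h
  · refine le_iInf₂ fun j hj => ?_
    rw [cond_uniq n hj h]

lemma wCost_ne_top_iff {n : ℕ} {u v : Vert n} :
    wCost ε n u v ≠ ⊤ ↔ ∃ k, edgeAt n k u v ∨ edgeAt n k v u := by
  constructor
  · intro h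
    by_contra hn
    push_neg at hn
    apply h
    rw [wCost_eq_iInf]
    simp only [iInf_eq_top]
    intro k hk
    rcases hk with hk | hk
    · exact absurd hk (hn k).1
    · exact absurd hk (hn k).2
  · rintro ⟨k, hk⟩
    rw [wCost_eq_of_cond hk]
    exact Wt_ne_top k

lemma wCost_ge (hε0 : 0 < ε) (hε : ε < 1/2) {n : ℕ} {u v : Vert n} (h : wCost ε n u v ≠ ⊤) :
    Wt ε n ≤ wCost ε n u v := by
  obtain ⟨k, hk⟩ := wCost_ne_top_iff.1 h
  rw [wCost_eq_of_cond hk]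
  rcases hk with hk | hk
  · exact Wt_le hε0 hε (edgeAt_le n hk)
  · exact Wt_le hε0 hε (edgeAt_le n hk)

lemma cond_of_wCost_eq (hε0 : 0 < ε) (hε : ε < 1/2) {n k : ℕ} {u v : Vert n}
    (h : wCost ε n u v = Wt ε k) : edgeAt n k u v ∨ edgeAt n k v u := by
  obtain ⟨j, hj⟩ := wCost_ne_top_iff.1 (h ▸ Wt_ne_top k)
  rwa [Wt_inj hε0 hε ((wCost_eq_of_cond hj).symm.trans h)] at hj

lemma wCost_inl (n : ℕ) (u v : Vert n) :
    wCost ε (n+1) (Sum.inl u) (Sum.inl v) = wCost ε n u v := by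
  erw [wCost_eq_iInf, wCost_eq_iInf]
  refine iInf_congr fun k => ?_
  refine iInf_congr_Prop ?_ fun _ => rfl
  rw [edgeAt_succ_inl_inl, edgeAt_succ_inl_inl]

lemma wCost_inr_inr (n : ℕ) (z z' : Edg n × Bool) :
    wCost ε (n+1) (Sum.inr z) (Sum.inr z') = ⊤ := by
  by_contra h
  obtain ⟨k, hk | hk⟩ := wCost_ne_top_iff.1 h <;> exact edgeAt_succ_inr_inr hk

lemma wCost_inr_ne_top {n : ℕ} {u : Vert (n+1)} {z : Edg n × Bool}
    (h : wCost ε (n+1) u (Sum.inr z) ≠ ⊤) :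
    (u = Sum.inl z.1.1.1 ∨ u = Sum.inl z.1.1.2) ∧ wCost ε (n+1) u (Sum.inr z) = Wt ε (n+1) := by
  rcases sum_cases u with ⟨u', rfl⟩ | ⟨w, rfl⟩
  · obtain ⟨k, hk | hk⟩ := wCost_ne_top_iff.1 h
    · obtain ⟨hk1, hk2⟩ := edgeAt_succ_inl_inr.1 hk
      subst hk1
      exact ⟨Or.inl (by rw [hk2]), wCost_eq_of_cond (Or.inl hk)⟩
    · obtain ⟨hk1, hk2⟩ := edgeAt_succ_inr_inl.1 hk
      subst hk1
      exact ⟨Or.inr (by rw [hk2]), wCost_eq_of_cond (Or.inr hk)⟩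
  · exact absurd (wCost_inr_inr n w z) h

lemma wCost_inr_ne_top' {n : ℕ} {u : Vert (n+1)} {z : Edg n × Bool}
    (h : wCost ε (n+1) (Sum.inr z) u ≠ ⊤) :
    (u = Sum.inl z.1.1.1 ∨ u = Sum.inl z.1.1.2) ∧ wCost ε (n+1) (Sum.inr z) u = Wt ε (n+1) := by
  erw [wCost_comm] at h ⊢
  exact wCost_inr_ne_top h

lemma wCost_edg (n : ℕ) (e : Edg n) :
    wCost ε (n+1) (Sum.inl e.1.1) (Sum.inl e.1.2) = Wt ε n := by
  rw [wCost_inl]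
  exact wCost_eq_of_cond (Or.inl (edgeAt_of_dEdge n e.2))

end WCost
/-! ### walk cost machinery -/
section Walks
variable {V : Type*} (c : V → V → ℝ≥0∞)

@[simp] lemma walkCost_nil : walkCost c [] = 0 := rfl
@[simp] lemma walkCost_single (u : V) : walkCost c [u] = 0 := rfl
lemma walkCost_cons₂ (u v : V) (l : List V) :
    walkCost c (u :: v :: l) = c u v + walkCost c (v :: l) := rfl

lemma walkCost_append : ∀ (l : List V) (v : V) (m : List V),
    walkCost c (l ++ v :: m) = walkCost c (l ++ [v]) + walkCost c (v :: m)
  | [], v, m => by simp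
  | [x], v, m => by simp [walkCost_cons₂]
  | x :: x' :: l, v, m => by
    have ih := walkCost_append (x' :: l) v m
    simp only [List.cons_append, walkCost_cons₂] at *
    rw [ih, add_assoc]

lemma walkCost_concat {l : List V} {b : V} (hb : l.getLast? = some b) (v : V) :
    walkCost c (l ++ [v]) = walkCost c l + c b v := by
  obtain ⟨l', rfl⟩ := List.getLast?_eq_some_iff.1 hb
  have := walkCost_append c l' b [v]
  simp only [List.append_assoc, List.cons_append, List.nil_append] at this ⊢
  rw [this, walkCost_cons₂]
  simp

lemma walkCost_decomp {m : List V} {hm z : V} (h1 : m.head? = some hm) (h2 : m.getLast? = some z)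
    (l₁ l₂ : List V) :
    walkCost c (l₁ ++ m ++ l₂) = walkCost c (l₁ ++ [hm]) + walkCost c m + walkCost c (z :: l₂) := by
  obtain ⟨m', rfl⟩ : ∃ m', m = hm :: m' := by
    cases m with
    | nil => simp at h1
    | cons a m' => exact ⟨m', by simpa using (by simpa using h1 : a = hm) ▸ rfl⟩
  have step1 : walkCost c (l₁ ++ (hm :: m') ++ l₂) = walkCost c (l₁ ++ [hm]) + walkCost c ((hm :: m') ++ l₂) := by
    rw [List.append_assoc, List.cons_append, walkCost_append c l₁ hm (m' ++ l₂)]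
  rw [step1, add_assoc]
  congr 1
  -- walkCost ((hm::m') ++ l₂) = walkCost (hm::m') + walkCost (z :: l₂)
  cases l₂ with
  | nil => simp
  | cons h₂ l₂' =>
    have := walkCost_append c (hm :: m') h₂ l₂'
    rw [this, walkCost_concat c h2 h₂, walkCost_cons₂, add_assoc]

lemma walkCost_comp (l : List V) {W : Type*} (f : W → V) (l₀ : List W)
    (hl : l = l₀.map f) (c' : W → W → ℝ≥0∞) (hc : ∀ a b, c' a b = c (f a) (f b)) :
    walkCost c l = walkCost c' l₀ := by
  subst hl
  induction l₀ with
  | nil => simp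
  | cons a l₀ ih =>
    cases l₀ with
    | nil => simp
    | cons b l₀ =>
      simp only [List.map_cons, walkCost_cons₂] at *
      rw [ih, hc]

/-- entries of the list of edge-costs of a walk -/
lemma walkCost_ne_top_pair : ∀ {l : List V}, walkCost c l ≠ ⊤ →
    ∀ (l₁ : List V) (a b : V) (l₂ : List V), l = l₁ ++ a :: b :: l₂ → c a b ≠ ⊤ := by
  intro l hl l₁ a b l₂ he
  subst he
  rw [walkCost_append c l₁ a (b :: l₂), walkCost_cons₂] at hl
  intro h
  rw [h] at hl
  simp at hl

lemma spDist_le {x y : V} (p : List V) (hh : p.head? = some x) (hl : p.getLast? = some y) :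
    spDist c x y ≤ walkCost c p := iInf_le _ (⟨p, hh, hl⟩ : {l : List V // l.head? = some x ∧ l.getLast? = some y})

lemma spDist_self_le (x : V) : spDist c x x ≤ 0 := by
  simpa using spDist_le c [x] rfl rfl

lemma exists_walk_lt {x y : V} {b : ℝ≥0∞} (h : spDist c x y < b) :
    ∃ q : List V, q.head? = some x ∧ q.getLast? = some y ∧ walkCost c q < b := by
  rw [spDist, iInf_lt_iff] at h
  obtain ⟨⟨q, h1, h2⟩, hq⟩ := h
  exact ⟨q, h1, h2, hq⟩

lemma submin {x y : V} {l₁ l₂ m : List V} {hm z : V}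
    (h1 : m.head? = some hm) (h2 : m.getLast? = some z)
    (hh : (l₁ ++ m ++ l₂).head? = some x) (hl : (l₁ ++ m ++ l₂).getLast? = some y)
    (hfin : walkCost c (l₁ ++ m ++ l₂) ≠ ⊤)
    (hmin : walkCost c (l₁ ++ m ++ l₂) = spDist c x y) :
    walkCost c m ≠ ⊤ ∧ walkCost c m = spDist c hm z := by
  have hmne : m ≠ [] := by rintro rfl; simp at h1
  have hd := walkCost_decomp c h1 h2 l₁ l₂
  have hA : walkCost c (l₁ ++ [hm]) ≠ ⊤ := by
    intro h; rw [hd, h] at hfin; simp at hfin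
  have hB : walkCost c (z :: l₂) ≠ ⊤ := by
    intro h; rw [hd, h] at hfin; simp at hfin
  have hM : walkCost c m ≠ ⊤ := by
    intro h; rw [hd, h] at hfin; simp at hfin
  refine ⟨hM, le_antisymm ?_ (spDist_le c m h1 h2)⟩
  by_contra hc
  push_neg at hc
  obtain ⟨q, hq1, hq2, hq3⟩ := exists_walk_lt c hc
  have hqne : q ≠ [] := by rintro rfl; simp at hq1
  -- the spliced walk
  have hd' := walkCost_decomp c hq1 hq2 l₁ l₂
  have hhead' : (l₁ ++ q ++ l₂).head? = some x := by
    cases l₁ with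
    | nil =>
      simp only [List.nil_append] at hh ⊢
      have hx : some hm = some x := by
        rw [← hh, List.head?_append_of_ne_nil m hmne, h1]
      rw [List.head?_append_of_ne_nil q hqne, hq1, hx]
    | cons a l₁' =>
      simp only [List.cons_append] at hh ⊢
      exact hh
  have hlast' : (l₁ ++ q ++ l₂).getLast? = some y := by
    cases l₂ with
    | nil =>
      simp only [List.append_nil] at hl ⊢
      have hy : some z = some y := by
        rw [← hl, List.getLast?_append_of_ne_nil l₁ hmne, h2]
      rw [List.getLast?_append_of_ne_nil l₁ hqne, hq2, hy]
    | cons a l₂' =>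
      rw [List.append_assoc, List.getLast?_append_of_ne_nil l₁ (by simp : (q ++ a :: l₂') ≠ []),
        List.getLast?_append_of_ne_nil q (by simp : (a :: l₂') ≠ [])]
      rw [List.append_assoc, List.getLast?_append_of_ne_nil l₁ (by simp : (m ++ a :: l₂') ≠ []),
        List.getLast?_append_of_ne_nil m (by simp : (a :: l₂') ≠ [])] at hl
      exact hl
  have hlt : walkCost c (l₁ ++ q ++ l₂) < walkCost c (l₁ ++ m ++ l₂) := by
    rw [hd, hd']
    have := ENNReal.add_lt_add_left hA (ENNReal.add_lt_add_right hB hq3)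
    calc walkCost c (l₁ ++ [hm]) + walkCost c q + walkCost c (z :: l₂)
        = walkCost c (l₁ ++ [hm]) + (walkCost c q + walkCost c (z :: l₂)) := by rw [add_assoc]
      _ < walkCost c (l₁ ++ [hm]) + (walkCost c m + walkCost c (z :: l₂)) := this
      _ = walkCost c (l₁ ++ [hm]) + walkCost c m + walkCost c (z :: l₂) := by rw [add_assoc]
  have := spDist_le c _ hhead' hlast'
  rw [← hmin] at this
  exact absurd (this.trans_lt hlt) (lt_irrefl _)

end Walks
/-! ### the list of edge weights of a walk -/
section Wlist
variable {V : Type*} (c : V → V → ℝ≥0∞)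

def wlist : List V → List ℝ≥0∞
  | u :: v :: l => c u v :: wlist (v :: l)
  | _ => []

@[simp] lemma wlist_nil : wlist c ([] : List V) = [] := rfl
@[simp] lemma wlist_single (u : V) : wlist c [u] = [] := rfl
lemma wlist_cons₂ (u v : V) (l : List V) : wlist c (u :: v :: l) = c u v :: wlist c (v :: l) := rfl

lemma wlist_length : ∀ p : List V, (wlist c p).length = p.length - 1
  | [] => rfl
  | [_] => rfl
  | u :: v :: l => by
    rw [wlist_cons₂]
    simp only [List.length_cons, wlist_length (v :: l)]
    simp

lemma getD_eq_getElem (p : List V) (d : V) (i : ℕ) (h : i < p.length) : p.getD i d = p[i] := by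
  simp [List.getD_eq_getElem?_getD, List.getElem?_eq_getElem h]

lemma wlist_getD (d : V) : ∀ (p : List V) (i : ℕ), i + 1 < p.length →
    (wlist c p).getD i ⊤ = c (p.getD i d) (p.getD (i + 1) d)
  | [], i, h => by simp at h
  | [_], i, h => by simp at h
  | u :: v :: l, 0, h => by simp [wlist_cons₂]
  | u :: v :: l, i + 1, h => by
    rw [wlist_cons₂]
    simp only [List.getD_cons_succ]
    exact wlist_getD d (v :: l) i (by simpa using h)

lemma wlist_concat : ∀ (l : List V) {b : V}, l.getLast? = some b → ∀ v : V,
    wlist c (l ++ [v]) = wlist c l ++ [c b v]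
  | [], b, hb, v => by simp at hb
  | [u], b, hb, v => by
    simp only [List.getLast?_singleton, Option.some.injEq] at hb
    subst hb
    simp [wlist_cons₂]
  | u :: u' :: l, b, hb, v => by
    rw [List.getLast?_cons_cons] at hb
    simp only [List.cons_append, wlist_cons₂]
    rw [show u' :: (l ++ [v]) = (u' :: l) ++ [v] from rfl, wlist_concat (u' :: l) hb v]

lemma wlist_map {W : Type*} (f : W → V) (c' : W → W → ℝ≥0∞)
    (hc : ∀ a b, c' a b = c (f a) (f b)) : ∀ (l₀ : List W),
    wlist c (l₀.map f) = wlist c' l₀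
  | [] => rfl
  | [_] => rfl
  | a :: b :: l₀ => by
    simp only [List.map_cons, wlist_cons₂]
    rw [hc, show f b :: List.map f l₀ = List.map f (b :: l₀) from rfl,
      wlist_map f c' hc (b :: l₀)]

lemma wlist_mem : ∀ {p : List V} {w : ℝ≥0∞}, w ∈ wlist c p → ∃ a b, w = c a b := by
  intro p
  induction p with
  | nil => intro w h; simp at h
  | cons u l ih =>
    cases l with
    | nil => intro w h; simp at h
    | cons v l' =>
      intro w h
      rw [wlist_cons₂] at h
      rcases List.mem_cons.1 h with h | h
      · exact ⟨u, v, h⟩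
      · exact ih h

lemma wlist_mem_ne_top : ∀ {p : List V}, walkCost c p ≠ ⊤ → ∀ w ∈ wlist c p, w ≠ ⊤ := by
  intro p
  induction p with
  | nil => intro _ w h; simp at h
  | cons u l ih =>
    cases l with
    | nil => intro _ w h; simp at h
    | cons v l' =>
      intro hfin w h
      rw [walkCost_cons₂] at hfin
      rw [wlist_cons₂] at h
      rcases List.mem_cons.1 h with rfl | h
      · exact fun he => hfin (by rw [he]; simp)
      · exact ih (fun he => hfin (by rw [he]; simp)) w h

lemma walkCost_ne_top_of (d : V) : ∀ (p : List V),
    (∀ i, i + 1 < p.length → c (p.getD i d) (p.getD (i + 1) d) ≠ ⊤) → walkCost c p ≠ ⊤ := by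
  intro p
  induction p with
  | nil => intro _; simp
  | cons u l ih =>
    cases l with
    | nil => intro _; simp
    | cons v l' =>
      intro h
      rw [walkCost_cons₂]
      refine ENNReal.add_ne_top.2 ⟨?_, ih ?_⟩
      · have := h 0 (by simp)
        simpa using this
      · intro i hi
        have := h (i + 1) (by simpa using hi)
        simpa using this

lemma take_triple (p : List V) (i : ℕ) (h : i + 2 < p.length) :
    p = p.take i ++ [p[i], p[i+1], p[i+2]] ++ p.drop (i + 3) := by
  conv_lhs => rw [← List.take_append_drop i p]
  rw [List.append_assoc]
  congr 1
  rw [List.drop_eq_getElem_cons (by omega), List.drop_eq_getElem_cons (l := p) (by omega),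
    List.drop_eq_getElem_cons (l := p) (by omega)]
  simp

end Wlist
/-! ### cleaning walks at level n+1 -/
section Clean
variable {ε : ℝ}

lemma head?_pres {V : Type*} (l : List V) (v : V) (m m' : List V) :
    (l ++ v :: m).head? = (l ++ v :: m').head? := by cases l <;> rfl

lemma getLast?_pres {V : Type*} (l l' : List V) (v : V) (m : List V) :
    (l ++ v :: m).getLast? = (l' ++ v :: m).getLast? := by
  rw [List.getLast?_append_of_ne_nil l (List.cons_ne_nil v m),
    List.getLast?_append_of_ne_nil l' (List.cons_ne_nil v m)]

lemma exists_unmap {n : ℕ} : ∀ {p : List (Vert (n+1))},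
    (∀ a ∈ p, ∃ u : Vert n, a = Sum.inl u) → ∃ p₀ : List (Vert n), p = p₀.map Sum.inl := by
  intro p
  induction p with
  | nil => exact fun _ => ⟨[], rfl⟩
  | cons a l ih =>
    intro h
    obtain ⟨u, rfl⟩ := h a (List.mem_cons_self)
    obtain ⟨p₀, rfl⟩ := ih fun b hb => h b (List.mem_cons_of_mem _ hb)
    exact ⟨u :: p₀, rfl⟩

lemma clean (hε0 : 0 < ε) (hε : ε < 1/2) (n : ℕ) :
    ∀ (N : ℕ) (p : List (Vert (n+1))), p.length ≤ N → ∀ (x y : Vert n),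
      p.head? = some (Sum.inl x) → p.getLast? = some (Sum.inl y) →
      ∃ p₀ : List (Vert n), p₀.head? = some x ∧ p₀.getLast? = some y ∧
        walkCost (wCost ε n) p₀ ≤ walkCost (wCost ε (n+1)) p ∧
        ((∃ a ∈ p, ∃ z : Edg n × Bool, a = Sum.inr z) → walkCost (wCost ε (n+1)) p ≠ ⊤ →
          walkCost (wCost ε n) p₀ < walkCost (wCost ε (n+1)) p) := by
  intro N
  induction N with
  | zero =>
    intro p hp x y hh hl
    have : p = [] := List.length_eq_zero_iff.1 (Nat.le_zero.1 hp)
    subst this; simp at hh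
  | succ N ih =>
    intro p hp x y hh hl
    by_cases hso : ∃ a ∈ p, ∃ z : Edg n × Bool, a = Sum.inr z
    case neg =>
      have hall : ∀ a ∈ p, ∃ u : Vert n, a = Sum.inl u := by
        intro a ha
        rcases sum_cases a with ⟨u, rfl⟩ | ⟨z, rfl⟩
        · exact ⟨u, rfl⟩
        · exact absurd ⟨_, ha, z, rfl⟩ hso
      obtain ⟨p₀, rfl⟩ := exists_unmap hall
      have hcost : walkCost (wCost ε (n+1)) (p₀.map Sum.inl) = walkCost (wCost ε n) p₀ :=
        walkCost_comp _ _ Sum.inl p₀ rfl _ (fun a b => (wCost_inl n a b).symm)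
      refine ⟨p₀, ?_, ?_, le_of_eq hcost.symm, ?_⟩
      · erw [List.head?_map] at hh
        cases hp₀ : p₀.head? with
        | none => rw [hp₀] at hh; cases hh
        | some b =>
          erw [hp₀] at hh
          replace hh := Option.some.inj hh
          rw [Sum.inl.inj hh]
      · erw [List.getLast?_map] at hl
        cases hp₀ : p₀.getLast? with
        | none => rw [hp₀] at hl; cases hl
        | some b =>
          erw [hp₀] at hl
          replace hl := Option.some.inj hl
          rw [Sum.inl.inj hl]
      · rintro ⟨a, ha, z, rfl⟩ _
        obtain ⟨u, hu⟩ := hall _ ha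
        exact absurd hu (by simp)
    case pos =>
      obtain ⟨a, hap, z, haz⟩ := hso
      obtain ⟨l₁, l₂, rfl⟩ := List.append_of_mem hap
      by_cases hfin : walkCost (wCost ε (n+1)) (l₁ ++ a :: l₂) = ⊤
      · refine ⟨[x, y], rfl, by simp, by rw [hfin]; exact le_top, fun _ hne => absurd hfin hne⟩
      -- l₁ and l₂ are nonempty
      have hl₁ : l₁ ≠ [] := by
        rintro rfl
        simp only [List.nil_append, List.head?_cons, Option.some.injEq] at hh
        rw [haz] at hh
        cases hh
      have hl₂ : l₂ ≠ [] := by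
        rintro rfl
        rw [List.getLast?_concat] at hl
        have := Option.some.inj hl
        rw [haz] at this
        exact absurd this.symm (by simp)
      obtain ⟨l₁', b, rfl⟩ : ∃ L B, l₁ = L ++ [B] := by
        rcases List.eq_nil_or_concat' l₁ with h | ⟨L, B, h⟩
        · exact absurd h hl₁
        · exact ⟨L, B, h⟩
      obtain ⟨c, l₂', rfl⟩ : ∃ C L, l₂ = C :: L := by
        cases l₂ with
        | nil => exact absurd rfl hl₂
        | cons C L => exact ⟨C, L, rfl⟩
      set W := wCost ε (n+1) with hW
      have hd := walkCost_decomp W (m := [b, a, c]) rfl (show ([b, a, c] : List (Vert (n+1))).getLast? = some c by simp) l₁' l₂'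
      rw [show l₁' ++ [b, a, c] ++ l₂' = (l₁' ++ [b]) ++ a :: c :: l₂' by simp] at hd
      have htri : walkCost W [b, a, c] = W b a + (W a c + 0) := rfl
      set A := walkCost W (l₁' ++ [b]) with hA
      set B := walkCost W (c :: l₂') with hB
      have hAne : A ≠ ⊤ := fun h => hfin (by rw [hd, h]; simp)
      have hBne : B ≠ ⊤ := fun h => hfin (by rw [hd, h]; simp)
      have hba : W b a ≠ ⊤ := fun h => hfin (by rw [hd, htri, h]; simp)
      have hac : W a c ≠ ⊤ := fun h => hfin (by rw [hd, htri, h]; simp)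
      rw [haz] at hba hac
      obtain ⟨hbmem, hbval⟩ := wCost_inr_ne_top hba
      obtain ⟨hcmem, hcval⟩ := wCost_inr_ne_top' hac
      erw [← haz] at hbval hcval
      rw [← hW] at hbval hcval
      by_cases hbc : b = c
      · -- backtrack: delete [a, c]
        set p' := l₁' ++ b :: l₂' with hp'
        have hcost' : walkCost W p' = A + B := by
          rw [hp', walkCost_append W l₁' b l₂', hA, hB, hbc]
        have hcostp : walkCost W ((l₁' ++ [b]) ++ a :: c :: l₂')
            = A + B + (Wt ε (n+1) + Wt ε (n+1)) := by
          rw [hd, htri, hbval, hcval]; ring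
        have hlt : walkCost W p' < walkCost W ((l₁' ++ [b]) ++ a :: c :: l₂') := by
          rw [hcost', hcostp]
          refine ENNReal.lt_add_right (by simp [hAne, hBne]) ?_
          intro h
          exact Wt_ne_zero hε0 (n+1) (add_eq_zero.1 h).1
        have hh' : p'.head? = some (Sum.inl x) := by
          rw [hp']
          rw [show (l₁' ++ [b]) ++ a :: c :: l₂' = l₁' ++ b :: (a :: c :: l₂') by simp] at hh
          rw [← head?_pres l₁' b (a :: c :: l₂') l₂']
          exact hh
        have hl' : p'.getLast? = some (Sum.inl y) := by
          rw [hp']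
          cases l₂' with
          | nil =>
            rw [show (l₁' ++ [b]) ++ a :: c :: ([] : List (Vert (n+1)))
              = (l₁' ++ [b] ++ [a]) ++ c :: [] by simp] at hl
            rw [List.getLast?_concat] at hl
            rw [List.getLast?_concat, hbc]
            exact hl
          | cons d l₂'' =>
            rw [show (l₁' ++ [b]) ++ a :: c :: d :: l₂'' = (l₁' ++ [b] ++ [a, c]) ++ d :: l₂'' by simp] at hl
            rw [show l₁' ++ b :: d :: l₂'' = (l₁' ++ [b]) ++ d :: l₂'' by simp]
            rw [getLast?_pres (l₁' ++ [b]) (l₁' ++ [b] ++ [a, c]) d l₂'']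
            exact hl
        obtain ⟨p₀, h1, h2, h3, _⟩ := ih p' (by simp [hp'] at hp ⊢; omega) x y hh' hl'
        exact ⟨p₀, h1, h2, h3.trans hlt.le, fun _ _ => lt_of_le_of_lt h3 hlt⟩
      · -- shortcut: replace [b, a, c] by the generation-n edge [b, c]
        have hwbc : W b c = Wt ε n := by
          rcases hbmem with hb | hb <;> rcases hcmem with hc | hc <;> rw [hb, hc]
          · rw [hb, hc] at hbc; exact absurd rfl hbc
          · exact wCost_edg n z.1
          · erw [hW, wCost_comm]; exact wCost_edg n z.1
          · rw [hb, hc] at hbc; exact absurd rfl hbc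
        set p' := l₁' ++ b :: c :: l₂' with hp'
        have hcost' : walkCost W p' = A + B + Wt ε n := by
          rw [hp', walkCost_append W l₁' b (c :: l₂'), walkCost_cons₂, hwbc, hA, hB]; ring
        have hcostp : walkCost W ((l₁' ++ [b]) ++ a :: c :: l₂')
            = A + B + (Wt ε (n+1) + Wt ε (n+1)) := by
          rw [hd, htri, hbval, hcval]; ring
        have hlt : walkCost W p' < walkCost W ((l₁' ++ [b]) ++ a :: c :: l₂') := by
          rw [hcost', hcostp]
          exact ENNReal.add_lt_add_left (by simp [hAne, hBne]) (Wt_split hε0 n)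
        have hh' : p'.head? = some (Sum.inl x) := by
          rw [hp']
          rw [show (l₁' ++ [b]) ++ a :: c :: l₂' = l₁' ++ b :: (a :: c :: l₂') by simp] at hh
          rw [← head?_pres l₁' b (a :: c :: l₂') (c :: l₂')]
          exact hh
        have hl' : p'.getLast? = some (Sum.inl y) := by
          rw [hp']
          rw [show (l₁' ++ [b]) ++ a :: c :: l₂' = (l₁' ++ [b] ++ [a]) ++ c :: l₂' by simp] at hl
          rw [show l₁' ++ b :: c :: l₂' = (l₁' ++ [b]) ++ c :: l₂' by simp]
          rw [getLast?_pres (l₁' ++ [b]) (l₁' ++ [b] ++ [a]) c l₂']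
          exact hl
        obtain ⟨p₀, h1, h2, h3, _⟩ := ih p' (by simp [hp'] at hp ⊢; omega) x y hh' hl'
        exact ⟨p₀, h1, h2, h3.trans hlt.le, fun _ _ => lt_of_le_of_lt h3 hlt⟩

lemma spDist_inl (hε0 : 0 < ε) (hε : ε < 1/2) (n : ℕ) (x y : Vert n) :
    spDist (wCost ε (n+1)) (Sum.inl x) (Sum.inl y) = spDist (wCost ε n) x y := by
  apply le_antisymm
  · refine le_iInf fun q => ?_
    obtain ⟨q₀, hq1, hq2⟩ := q
    have : walkCost (wCost ε (n+1)) (q₀.map Sum.inl) = walkCost (wCost ε n) q₀ :=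
      walkCost_comp _ _ Sum.inl q₀ rfl _ (fun a b => (wCost_inl n a b).symm)
    rw [← this]
    exact spDist_le _ _ (by erw [List.head?_map, hq1]; rfl) (by erw [List.getLast?_map, hq2]; rfl)
  · refine le_iInf fun q => ?_
    obtain ⟨q', hq1, hq2⟩ := q
    obtain ⟨p₀, h1, h2, h3, _⟩ := clean hε0 hε n q'.length q' le_rfl x y hq1 hq2
    exact (spDist_le _ p₀ h1 h2).trans h3

lemma no_inr (hε0 : 0 < ε) (hε : ε < 1/2) {n : ℕ} {x y : Vert n} {p : List (Vert (n+1))}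
    (hh : p.head? = some (Sum.inl x)) (hl : p.getLast? = some (Sum.inl y))
    (hfin : walkCost (wCost ε (n+1)) p ≠ ⊤)
    (hmin : walkCost (wCost ε (n+1)) p = spDist (wCost ε (n+1)) (Sum.inl x) (Sum.inl y)) :
    ∀ a ∈ p, ∃ u : Vert n, a = Sum.inl u := by
  intro a hap
  rcases sum_cases a with ⟨u, rfl⟩ | ⟨z, rfl⟩
  · exact ⟨u, rfl⟩
  exfalso
  obtain ⟨p₀, h1, h2, _, h4⟩ := clean hε0 hε n p.length p le_rfl x y hh hl
  have hstrict := h4 ⟨_, hap, z, rfl⟩ hfin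
  have : walkCost (wCost ε (n+1)) (p₀.map Sum.inl) = walkCost (wCost ε n) p₀ :=
    walkCost_comp _ _ Sum.inl p₀ rfl _ (fun a b => (wCost_inl n a b).symm)
  have hle := spDist_le (wCost ε (n+1)) (p₀.map Sum.inl)
    (by erw [List.head?_map, h1]; rfl) (by erw [List.getLast?_map, h2]; rfl)
  rw [this, ← hmin] at hle
  exact absurd (hle.trans_lt hstrict) (lt_irrefl _)

end Clean
/-! ### the master structural lemma -/
section Master
variable {ε : ℝ}

lemma wlist_lb (hε0 : 0 < ε) (hε : ε < 1/2) {n : ℕ} {q : List (Vert n)}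
    (hfin : walkCost (wCost ε n) q ≠ ⊤) : ∀ w ∈ wlist (wCost ε n) q, Wt ε n ≤ w := by
  intro w hw
  obtain ⟨a, b, rfl⟩ := wlist_mem _ hw
  exact wCost_ge hε0 hε (wlist_mem_ne_top _ hfin _ hw)

lemma head?_unmap {n : ℕ} {p₀ : List (Vert n)} {x : Vert n}
    (h : (p₀.map Sum.inl).head? = some (Sum.inl x : Vert (n+1))) : p₀.head? = some x := by
  rw [List.head?_map] at h
  cases hp₀ : p₀.head? with
  | none => rw [hp₀] at h; simp at h
  | some b =>
    erw [hp₀] at h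
    replace h := Option.some.inj h
    rw [Sum.inl.inj h]

lemma getLast?_unmap {n : ℕ} {p₀ : List (Vert n)} {y : Vert n}
    (h : (p₀.map Sum.inl).getLast? = some (Sum.inl y : Vert (n+1))) : p₀.getLast? = some y := by
  rw [List.getLast?_map] at h
  cases hp₀ : p₀.getLast? with
  | none => rw [hp₀] at h; simp at h
  | some b =>
    erw [hp₀] at h
    replace h := Option.some.inj h
    rw [Sum.inl.inj h]

lemma master (hε0 : 0 < ε) (hε : ε < 1/2) : ∀ (n : ℕ) (p : List (Vert n)) (x y : Vert n),
    p.head? = some x → p.getLast? = some y →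
    walkCost (wCost ε n) p ≠ ⊤ → walkCost (wCost ε n) p = spDist (wCost ε n) x y →
    ∃ u d : List ℝ≥0∞, wlist (wCost ε n) p = u ++ d ∧
      List.IsChain (· < ·) u ∧ List.IsChain (fun a b => b < a) d := by
  intro n
  induction n with
  | zero =>
    intro p x y hh hl hfin hmin
    match p with
    | [] => simp at hh
    | [A] => exact ⟨[], [], by simp, List.isChain_nil, List.isChain_nil⟩
    | [A, B] =>
      exact ⟨[wCost ε 0 A B], [], by simp [wlist_cons₂], List.isChain_singleton _, List.isChain_nil⟩
    | A :: B :: C :: rest =>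
      exfalso
      have hx : A = x := by simpa using hh
      subst hx
      -- the first two edges both have weight 1
      have hAB : wCost ε 0 A B ≠ ⊤ := by
        intro h; apply hfin; rw [walkCost_cons₂, h]; simp
      have hBC : wCost ε 0 B C ≠ ⊤ := by
        intro h; apply hfin; rw [walkCost_cons₂, walkCost_cons₂, h]; simp
      have hABv : wCost ε 0 A B = Wt ε 0 := by
        obtain ⟨k, hk⟩ := wCost_ne_top_iff.1 hAB
        have hk0 : k = 0 := by rcases hk with hk | hk; exacts [hk.1, hk.1]
        subst hk0; exact wCost_eq_of_cond hk
      have hBCv : wCost ε 0 B C = Wt ε 0 := by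
        obtain ⟨k, hk⟩ := wCost_ne_top_iff.1 hBC
        have hk0 : k = 0 := by rcases hk with hk | hk; exacts [hk.1, hk.1]
        subst hk0; exact wCost_eq_of_cond hk
      have hcost2 : Wt ε 0 + Wt ε 0 ≤ walkCost (wCost ε 0) (A :: B :: C :: rest) := by
        rw [walkCost_cons₂, walkCost_cons₂, hABv, hBCv, ← add_assoc]
        exact le_add_right le_rfl
      -- spDist is at most Wt ε 0
      have hsp : spDist (wCost ε 0) A y ≤ Wt ε 0 := by
        by_cases hxy : A = y
        · subst hxy
          exact (spDist_self_le _ A).trans zero_le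
        · have hcond : edgeAt 0 0 A y ∨ edgeAt 0 0 y A := by
            have hA2 := vert0_cases A
            have hy2 := vert0_cases y
            rcases hA2 with h1 | h1 <;> rcases hy2 with h2 | h2
            · exact absurd (h1.trans h2.symm) hxy
            · exact Or.inl ⟨rfl, h1, h2⟩
            · exact Or.inr ⟨rfl, h2, h1⟩
            · exact absurd (h1.trans h2.symm) hxy
          have hval : wCost ε 0 A y = Wt ε 0 := wCost_eq_of_cond hcond
          have := spDist_le (wCost ε 0) [A, y] rfl rfl
          rw [walkCost_cons₂, hval] at this
          simpa using this
      rw [← hmin] at hsp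
      have : Wt ε 0 + Wt ε 0 ≤ Wt ε 0 := hcost2.trans hsp
      have hlt : Wt ε 0 < Wt ε 0 + Wt ε 0 :=
        ENNReal.lt_add_right (Wt_ne_top 0) (Wt_ne_zero hε0 0)
      exact absurd (this.trans_lt hlt) (lt_irrefl _)
  | succ n ihn =>
    intro p x y hh hl hfin hmin
    have step : ∀ (q : List (Vert (n+1))) (x' y' : Vert n),
        q.head? = some (Sum.inl x') → q.getLast? = some (Sum.inl y') →
        walkCost (wCost ε (n+1)) q ≠ ⊤ →
        walkCost (wCost ε (n+1)) q = spDist (wCost ε (n+1)) (Sum.inl x') (Sum.inl y') →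
        ∃ u d : List ℝ≥0∞, wlist (wCost ε (n+1)) q = u ++ d ∧
          List.IsChain (· < ·) u ∧ List.IsChain (fun a b => b < a) d ∧
          (∀ w ∈ wlist (wCost ε (n+1)) q, Wt ε n ≤ w) := by
      intro q x' y' h1 h2 h3 h4
      have hall := no_inr hε0 hε h1 h2 h3 h4
      obtain ⟨q₀, rfl⟩ := exists_unmap hall
      have hwl : wlist (wCost ε (n+1)) (q₀.map Sum.inl) = wlist (wCost ε n) q₀ :=
        wlist_map _ Sum.inl _ (fun a b => (wCost_inl n a b).symm) q₀
      have hcost : walkCost (wCost ε (n+1)) (q₀.map Sum.inl) = walkCost (wCost ε n) q₀ :=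
        walkCost_comp _ _ Sum.inl q₀ rfl _ (fun a b => (wCost_inl n a b).symm)
      have h3' : walkCost (wCost ε n) q₀ ≠ ⊤ := by rw [← hcost]; exact h3
      have h4' : walkCost (wCost ε n) q₀ = spDist (wCost ε n) x' y' := by
        erw [← hcost, h4, spDist_inl hε0 hε]
      obtain ⟨u, d, he, hcu, hcd⟩ := ihn q₀ x' y' (head?_unmap h1) (getLast?_unmap h2) h3' h4'
      refine ⟨u, d, by erw [hwl, he], hcu, hcd, ?_⟩
      intro w hw
      erw [hwl] at hw
      exact wlist_lb hε0 hε h3' w hw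
    match p with
    | [] => simp at hh
    | px :: rest =>
    have hx : px = x := by simpa using hh
    subst hx
    match rest with
    | [] => exact ⟨[], [], by simp, List.isChain_nil, List.isChain_nil⟩
    | cc :: rest₂ =>
    have hrne : (cc :: rest₂ : List (Vert (n+1))) ≠ [] := List.cons_ne_nil _ _
    have hly : (cc :: rest₂).getLast? = some y := by
      rw [show px :: cc :: rest₂ = [px] ++ (cc :: rest₂) from rfl,
        List.getLast?_append_of_ne_nil [px] hrne] at hl
      exact hl
    rcases sum_cases px with ⟨x', rfl⟩ | ⟨z₁, rfl⟩
    · rcases sum_cases y with ⟨y', hy⟩ | ⟨z₂, hy⟩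
      · subst hy
        obtain ⟨u, d, he, hcu, hcd, _⟩ := step _ x' y' hh hl hfin hmin
        exact ⟨u, d, he, hcu, hcd⟩
      · -- A2 : x = inl, y = inr
        subst hy
        obtain ⟨p', hp'⟩ := List.getLast?_eq_some_iff.1 hl
        have hp'ne : p' ≠ [] := by
          rintro rfl
          have := congrArg List.length hp'
          cases hp'
        obtain ⟨zL, hzL⟩ : ∃ zL, p'.getLast? = some zL := by
          cases hgl : p'.getLast? with
          | none => exact absurd (List.getLast?_eq_none_iff.1 hgl) hp'ne
          | some b => exact ⟨b, rfl⟩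
        have hconc := walkCost_concat (wCost ε (n+1)) hzL (Sum.inr z₂)
        have hfin' : wCost ε (n+1) zL (Sum.inr z₂) ≠ ⊤ := by
          intro h; apply hfin; erw [hp', hconc, h]; simp
        obtain ⟨hzmem, hzval⟩ := wCost_inr_ne_top hfin'
        obtain ⟨w', hwz⟩ : ∃ w', zL = Sum.inl w' := by
          rcases hzmem with h | h; exacts [⟨_, h⟩, ⟨_, h⟩]
        erw [show p' ++ ([Sum.inr z₂] : List (Vert (n+1))) = ([] : List (Vert (n+1))) ++ p' ++ ([Sum.inr z₂] : List (Vert (n+1))) by simp] at hp'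
        rw [hp'] at hh hl hfin hmin
        have hph : p'.head? = some (Sum.inl x') := by
          rw [List.nil_append, List.head?_append_of_ne_nil p' hp'ne] at hh
          exact hh
        obtain ⟨hfinp', hminp'⟩ := submin (wCost ε (n+1)) hph hzL hh hl hfin hmin
        obtain ⟨u, d, he, hcu, hcd, hlb⟩ := step p' x' w' hph (hwz ▸ hzL) hfinp' (by
          rw [hminp', hwz]; exact rfl)
        refine ⟨u, d ++ [Wt ε (n+1)], ?_, hcu, ?_⟩
        · erw [show wlist (wCost ε (n+1)) (Sum.inl x' :: cc :: rest₂)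
              = wlist (wCost ε (n+1)) ([] ++ p' ++ ([Sum.inr z₂] : List (Vert (n+1)))) by rw [← hp']; exact rfl,
            List.nil_append, wlist_concat _ p' hzL, hzval, he, List.append_assoc]
        · rw [List.isChain_append]
          refine ⟨hcd, List.isChain_singleton _, ?_⟩
          intro a ha b hb
          simp only [List.head?_cons, Option.mem_def, Option.some.injEq] at hb
          subst hb
          have had : a ∈ d := List.mem_of_getLast? ha
          have halb : Wt ε n ≤ a := hlb a (by rw [he]; exact List.mem_append_right u had)
          exact lt_of_lt_of_le (Wt_lt hε0 hε (Nat.lt_succ_self n)) halb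
    · -- B : x = inr z₁
      have hxc : wCost ε (n+1) (Sum.inr z₁) cc ≠ ⊤ := by
        intro h; apply hfin; erw [walkCost_cons₂, h]; simp
      obtain ⟨hcmem, hcval⟩ := wCost_inr_ne_top' hxc
      obtain ⟨c', hc'⟩ : ∃ c', cc = Sum.inl c' := by
        rcases hcmem with h | h; exacts [⟨_, h⟩, ⟨_, h⟩]
      rcases sum_cases y with ⟨y', hy⟩ | ⟨z₂, hy⟩
      · -- B1 : y = inl
        subst hy
        erw [show (Sum.inr z₁ :: cc :: rest₂ : List (Vert (n+1)))
            = (([Sum.inr z₁] : List (Vert (n+1))) : List (Vert (n+1))) ++ (cc :: rest₂) ++ [] by simp; exact rfl] at hh hl hfin hmin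
        obtain ⟨hfinr, hminr⟩ := submin (wCost ε (n+1)) (rfl : (cc :: rest₂).head? = some cc)
          hly hh hl hfin hmin
        obtain ⟨u, d, he, hcu, hcd, hlb⟩ := step (cc :: rest₂) c' y' (hc' ▸ rfl) hly hfinr (by
          rw [hminr, hc']; exact rfl)
        refine ⟨Wt ε (n+1) :: u, d, ?_, ?_, hcd⟩
        · erw [wlist_cons₂, hcval, he]; rfl
        · rw [List.isChain_cons]
          refine ⟨?_, hcu⟩
          intro h hh'
          have hmem : h ∈ u := by
            cases u with
            | nil => simp at hh'
            | cons a u' =>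
              simp only [List.head?_cons, Option.mem_def, Option.some.injEq] at hh'
              subst hh'
              exact List.mem_cons_self
          have : Wt ε n ≤ h := hlb h (by rw [he]; exact List.mem_append_left d hmem)
          exact lt_of_lt_of_le (Wt_lt hε0 hε (Nat.lt_succ_self n)) this
      · -- B2 : x = inr, y = inr
        subst hy
        obtain ⟨rest', hr⟩ := List.getLast?_eq_some_iff.1 hly
        have hr'ne : rest' ≠ [] := by
          rintro rfl
          simp only [List.nil_append] at hr
          have : cc = Sum.inr z₂ := by
            have := congrArg List.head? hr
            cases hr; rfl
          rw [hc'] at this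
          cases this
        obtain ⟨zL, hzL⟩ : ∃ zL, rest'.getLast? = some zL := by
          cases hgl : rest'.getLast? with
          | none => exact absurd (List.getLast?_eq_none_iff.1 hgl) hr'ne
          | some b => exact ⟨b, rfl⟩
        have hrh : rest'.head? = some cc := by
          have := congrArg List.head? hr
          rw [List.head?_append_of_ne_nil rest' hr'ne] at this
          simpa using this.symm
        erw [show (Sum.inr z₁ :: cc :: rest₂ : List (Vert (n+1)))
            = (([Sum.inr z₁] : List (Vert (n+1))) : List (Vert (n+1))) ++ (cc :: rest₂) ++ [] by simp; exact rfl, hr,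
          show (([Sum.inr z₁] : List (Vert (n+1))) ++ (rest' ++ ([Sum.inr z₂] : List (Vert (n+1)))) ++ [] : List (Vert (n+1)))
            = (([Sum.inr z₁] : List (Vert (n+1))) : List (Vert (n+1))) ++ rest' ++ ([Sum.inr z₂] : List (Vert (n+1))) by simp] at hh hl hfin hmin
        obtain ⟨hfinr, hminr⟩ := submin (wCost ε (n+1)) hrh hzL hh hl hfin hmin
        have hconc := walkCost_concat (wCost ε (n+1)) hzL (Sum.inr z₂)
        have hfin' : wCost ε (n+1) zL (Sum.inr z₂) ≠ ⊤ := by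
          intro h
          apply hfin
          rw [show (([Sum.inr z₁] : List (Vert (n+1))) ++ rest' ++ ([Sum.inr z₂] : List (Vert (n+1))) : List (Vert (n+1)))
            = (([Sum.inr z₁] : List (Vert (n+1))) : List (Vert (n+1))) ++ (rest' ++ ([Sum.inr z₂] : List (Vert (n+1)))) ++ [] by simp]
          rw [show (([Sum.inr z₁] : List (Vert (n+1))) ++ (rest' ++ ([Sum.inr z₂] : List (Vert (n+1)))) ++ [] : List (Vert (n+1)))
            = Sum.inr z₁ :: (rest' ++ ([Sum.inr z₂] : List (Vert (n+1)))) by simp; exact rfl]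
          erw [show walkCost (wCost ε (n+1)) (Sum.inr z₁ :: (rest' ++ ([Sum.inr z₂] : List (Vert (n+1)))))
            = wCost ε (n+1) (Sum.inr z₁) cc + walkCost (wCost ε (n+1)) (rest' ++ ([Sum.inr z₂] : List (Vert (n+1))))
            from ?_]
          · rw [hconc, h]; simp
          · obtain ⟨rest'', hr''⟩ : ∃ L, rest' = cc :: L := by
              cases rest' with
              | nil => exact absurd rfl hr'ne
              | cons a L => exact ⟨L, by rw [show a = cc by simpa using hrh]⟩
            rw [hr'']
            rfl
        obtain ⟨hzmem, hzval⟩ := wCost_inr_ne_top hfin'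
        obtain ⟨w', hwz⟩ : ∃ w', zL = Sum.inl w' := by
          rcases hzmem with h | h; exacts [⟨_, h⟩, ⟨_, h⟩]
        obtain ⟨u, d, he, hcu, hcd, hlb⟩ := step rest' c' w' (hc' ▸ hrh) (hwz ▸ hzL) hfinr (by
          rw [hminr, hc', hwz])
        refine ⟨Wt ε (n+1) :: u, d ++ [Wt ε (n+1)], ?_, ?_, ?_⟩
        · erw [show wlist (wCost ε (n+1)) (Sum.inr z₁ :: cc :: rest₂)
              = wlist (wCost ε (n+1)) (Sum.inr z₁ :: (rest' ++ ([Sum.inr z₂] : List (Vert (n+1))))) from congrArg (fun l => wlist (wCost ε (n+1)) (Sum.inr z₁ :: l)) hr,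
            show wlist (wCost ε (n+1)) (Sum.inr z₁ :: (rest' ++ ([Sum.inr z₂] : List (Vert (n+1)))))
              = wCost ε (n+1) (Sum.inr z₁) cc :: wlist (wCost ε (n+1)) (rest' ++ ([Sum.inr z₂] : List (Vert (n+1))))
              from ?_, wlist_concat _ rest' hzL, hzval, hcval, he]
          · simp
          · obtain ⟨rest'', hr''⟩ : ∃ L, rest' = cc :: L := by
              cases rest' with
              | nil => exact absurd rfl hr'ne
              | cons a L => exact ⟨L, by rw [show a = cc by simpa using hrh]⟩
            rw [hr'']
            rfl
        · rw [List.isChain_cons]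
          refine ⟨?_, hcu⟩
          intro h hh'
          have hmem : h ∈ u := by
            cases u with
            | nil => simp at hh'
            | cons a u' =>
              simp only [List.head?_cons, Option.mem_def, Option.some.injEq] at hh'
              subst hh'
              exact List.mem_cons_self
          have : Wt ε n ≤ h := hlb h (by rw [he]; exact List.mem_append_left d hmem)
          exact lt_of_lt_of_le (Wt_lt hε0 hε (Nat.lt_succ_self n)) this
        · rw [List.isChain_append]
          refine ⟨hcd, List.isChain_singleton _, ?_⟩
          intro a ha b hb
          simp only [List.head?_cons, Option.mem_def, Option.some.injEq] at hb
          subst hb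
          have had : a ∈ d := List.mem_of_getLast? ha
          have halb : Wt ε n ≤ a := hlb a (by rw [he]; exact List.mem_append_right u had)
          exact lt_of_lt_of_le (Wt_lt hε0 hε (Nat.lt_succ_self n)) halb

end Master


/-- A shortest path between two vertices of the weighted diamond `W n`
contains at most two edges of length `(1/2+ε)^k` for each `k ≥ 1`, at most one edge of
length `1`, and if it contains two edges of the maximal occurring length, then these two
edges are adjacent (consecutive in the path). -/
theorem statement9 (ε : ℝ) (hε0 : 0 < ε) (hε : ε < 1 / 2) (n : ℕ) (x y : Vert n)
    (p : List (Vert n)) (hhead : p.head? = some x) (hlast : p.getLast? = some y)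
    (hwalk : ∀ i : ℕ, i + 1 < p.length →
      wCost ε n (p.getD i x) (p.getD (i + 1) x) ≠ ⊤)
    (hshort : walkCost (wCost ε n) p = spDist (wCost ε n) x y) :
    (∀ k : ℕ, 1 ≤ k →
      ((Finset.range (p.length - 1)).filter (fun i =>
        wCost ε n (p.getD i x) (p.getD (i + 1) x) =
          ENNReal.ofReal ((1 / 2 + ε) ^ k))).card ≤ 2) ∧
    ((Finset.range (p.length - 1)).filter (fun i =>
        wCost ε n (p.getD i x) (p.getD (i + 1) x) =
          ENNReal.ofReal ((1 / 2 + ε) ^ (0 : ℕ)))).card ≤ 1 ∧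
    (∀ t : ℕ, ∀ i j : ℕ, i < j → j + 1 < p.length →
      wCost ε n (p.getD i x) (p.getD (i + 1) x) = ENNReal.ofReal ((1 / 2 + ε) ^ t) →
      wCost ε n (p.getD j x) (p.getD (j + 1) x) = ENNReal.ofReal ((1 / 2 + ε) ^ t) →
      (∀ l : ℕ, l + 1 < p.length →
        wCost ε n (p.getD l x) (p.getD (l + 1) x) ≤ ENNReal.ofReal ((1 / 2 + ε) ^ t)) →
      j = i + 1) := by
  have pne : p ≠ [] := by rintro rfl; simp at hhead
  have hlen1 : 1 ≤ p.length := List.length_pos_iff.2 pne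
  have hfin : walkCost (wCost ε n) p ≠ ⊤ := walkCost_ne_top_of _ x p hwalk
  obtain ⟨u, d, he, hcu, hcd⟩ := master hε0 hε n p x y hhead hlast hfin hshort
  haveI : IsTrans ℝ≥0∞ (fun a b => b < a) := ⟨fun a b c h1 h2 => lt_trans h2 h1⟩
  have pu := List.isChain_iff_pairwise.mp hcu
  have pd := List.isChain_iff_pairwise.mp hcd
  have hu2 := List.pairwise_iff_getElem.mp pu
  have hd2 := List.pairwise_iff_getElem.mp pd
  set ws := wlist (wCost ε n) p with hwsdef
  have hwsL : ws.length = p.length - 1 := wlist_length _ p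
  have hwsL2 : ws.length = u.length + d.length := by rw [he, List.length_append]
  have hgetE : ∀ i, i + 1 < p.length →
      ws.getD i ⊤ = wCost ε n (p.getD i x) (p.getD (i + 1) x) :=
    fun i hi => wlist_getD _ x p i hi
  have hEu : ∀ i (h : i < u.length), ws.getD i ⊤ = u[i] := by
    intro i h
    rw [he, getD_eq_getElem _ ⊤ i (by rw [List.length_append]; omega)]
    exact List.getElem_append_left h
  have hEd : ∀ i (h1 : u.length ≤ i) (h2 : i - u.length < d.length),
      ws.getD i ⊤ = d[i - u.length]'h2 := by
    intro i h1 h2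
    rw [he, getD_eq_getElem _ ⊤ i (by rw [List.length_append]; omega)]
    exact List.getElem_append_right h1
  have key : ∀ t : ℕ,
      (∀ l, l + 1 < p.length → wCost ε n (p.getD l x) (p.getD (l + 1) x) ≤ Wt ε t) →
      ∀ i j, i < j → j + 1 < p.length →
      wCost ε n (p.getD i x) (p.getD (i + 1) x) = Wt ε t →
      wCost ε n (p.getD j x) (p.getD (j + 1) x) = Wt ε t → j = i + 1 := by
    intro t hmax i j hij hjlen hi hj
    have claim : ∀ idx, idx + 1 < p.length → ws.getD idx ⊤ = Wt ε t →
        idx + 1 = u.length ∨ idx = u.length := by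
      intro idx hidx hval
      by_cases h1 : idx + 1 < u.length
      · exfalso
        have hidx2 : idx + 1 + 1 < p.length := by omega
        have e1 : ws.getD idx ⊤ = u[idx]'(by omega) := hEu idx (by omega)
        have e2 : ws.getD (idx+1) ⊤ = u[idx+1]'h1 := hEu (idx+1) h1
        have hlt := hu2 idx (idx+1) (by omega) h1 (by omega)
        have q1 : u[idx]'(by omega) = Wt ε t := by rw [← e1]; exact hval
        have q2 : u[idx+1]'h1 ≤ Wt ε t := by
          rw [← e2, hgetE (idx+1) hidx2]; exact hmax (idx+1) hidx2
        have hcon : u[idx]'(by omega) < Wt ε t := hlt.trans_le q2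
        rw [q1] at hcon; exact lt_irrefl _ hcon
      · by_cases h2 : u.length < idx
        · exfalso
          have hidxws : idx < ws.length := by omega
          have hprev : idx - 1 + 1 < p.length := by omega
          have e1 : ws.getD (idx-1) ⊤ = d[idx-1-u.length]'(by omega) :=
            hEd (idx-1) (by omega) (by omega)
          have e2 : ws.getD idx ⊤ = d[idx-u.length]'(by omega) := hEd idx (by omega) (by omega)
          have hlt := hd2 (idx-1-u.length) (idx-u.length) (by omega) (by omega) (by omega)
          have q1 : d[idx-u.length]'(by omega) = Wt ε t := by rw [← e2]; exact hval
          have q2 : d[idx-1-u.length]'(by omega) ≤ Wt ε t := by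
            rw [← e1, hgetE (idx-1) hprev]; exact hmax (idx-1) hprev
          have hcon : d[idx-u.length]'(by omega) < Wt ε t := hlt.trans_le q2
          rw [q1] at hcon; exact lt_irrefl _ hcon
        · omega
    have ci := claim i (by omega) (by rw [hgetE i (by omega)]; exact hi)
    have cj := claim j hjlen (by rw [hgetE j hjlen]; exact hj)
    omega
  have hmax0 : ∀ l, l + 1 < p.length →
      wCost ε n (p.getD l x) (p.getD (l + 1) x) ≤ Wt ε 0 := by
    intro l hl
    obtain ⟨k', hk'⟩ := wCost_ne_top_iff.1 (hwalk l hl)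
    rw [wCost_eq_of_cond hk']
    exact Wt_le hε0 hε (Nat.zero_le k')
  refine ⟨?_, ?_, ?_⟩
  · -- at most two edges of each weight
    intro k _
    have side : ∀ a b : ℕ, a < b → b + 1 < p.length →
        ws.getD a ⊤ = Wt ε k → ws.getD b ⊤ = Wt ε k →
        ((a < u.length) ↔ (b < u.length)) → False := by
      intro a b hab hb1 ha hb hiff
      have hbws : b < ws.length := by omega
      have haws : a < ws.length := by omega
      by_cases hau : a < u.length
      · have hbu : b < u.length := hiff.1 hau
        have hlt := hu2 a b hau hbu hab
        have qa : u[a]'hau = Wt ε k := by rw [← hEu a hau]; exact ha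
        have qb : u[b]'hbu = Wt ε k := by rw [← hEu b hbu]; exact hb
        rw [qa, qb] at hlt; exact lt_irrefl _ hlt
      · have hbu : ¬ b < u.length := fun h => hau (hiff.2 h)
        have hlt := hd2 (a - u.length) (b - u.length) (by omega) (by omega) (by omega)
        have qa : d[a-u.length]'(by omega) = Wt ε k := by
          rw [← hEd a (by omega) (by omega)]; exact ha
        have qb : d[b-u.length]'(by omega) = Wt ε k := by
          rw [← hEd b (by omega) (by omega)]; exact hb
        rw [qa, qb] at hlt; exact lt_irrefl _ hlt
    refine le_trans (Finset.card_le_card_of_injOn (fun i => decide (i < u.length))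
      (fun a _ => Finset.mem_univ _) ?_) (le_of_eq (by simp))
    intro i₁ h₁ i₂ h₂ hdec
    rw [Finset.mem_coe, Finset.mem_filter, Finset.mem_range] at h₁ h₂
    have hiff : (i₁ < u.length) ↔ (i₂ < u.length) := by
      simpa using decide_eq_decide.mp hdec
    have hws₁ : ws.getD i₁ ⊤ = Wt ε k := by
      rw [hgetE i₁ (by omega)]; exact h₁.2
    have hws₂ : ws.getD i₂ ⊤ = Wt ε k := by
      rw [hgetE i₂ (by omega)]; exact h₂.2
    rcases lt_trichotomy i₁ i₂ with hlt | heq | hlt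
    · exact absurd (side i₁ i₂ hlt (by omega) hws₁ hws₂ hiff) not_false
    · exact heq
    · exact absurd (side i₂ i₁ hlt (by omega) hws₂ hws₁ hiff.symm) not_false
  · -- at most one edge of weight 1
    have bt : ∀ i j : ℕ, i < j →
        (j < p.length - 1) →
        wCost ε n (p.getD i x) (p.getD (i + 1) x) = Wt ε 0 →
        wCost ε n (p.getD j x) (p.getD (j + 1) x) = Wt ε 0 → False := by
      intro i j hij hjr hi hj
      have hj1 : j + 1 < p.length := by omega
      have hadj : j = i + 1 := key 0 hmax0 i j hij hj1 hi hj
      subst hadj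
      have hi2 : i + 2 < p.length := by omega
      have hia : i < p.length := by omega
      have hib : i + 1 < p.length := by omega
      have hE1 : wCost ε n (p[i]'hia) (p[i+1]'hib) = Wt ε 0 := by
        rw [← getD_eq_getElem p x i hia, ← getD_eq_getElem p x (i+1) hib]; exact hi
      have hE2 : wCost ε n (p[i+1]'hib) (p[i+2]'hi2) = Wt ε 0 := by
        rw [← getD_eq_getElem p x (i+1) hib, ← getD_eq_getElem p x (i+2) hi2]; exact hj
      have c1 := cond_of_wCost_eq hε0 hε hE1
      have c2 := cond_of_wCost_eq hε0 hε hE2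
      have hac : p[i]'hia = p[i+2]'hi2 := by
        rcases c1 with h | h <;> rcases c2 with h' | h' <;>
          rw [edgeAt_zero_iff] at h h'
        · exact absurd (h'.1.symm.trans h.2) (bot_ne n)
        · exact h.1.trans h'.1.symm
        · exact h.2.trans h'.2.symm
        · exact absurd (h.1.symm.trans h'.2) (bot_ne n)
      have hP := take_triple p i hi2
      rw [hP] at hfin hshort hhead hlast
      have hsub := submin (wCost ε n)
        (rfl : ([p[i]'hia, p[i+1]'hib, p[i+2]'hi2] : List (Vert n)).head? = some (p[i]'hia))
        (show ([p[i]'hia, p[i+1]'hib, p[i+2]'hi2] : List (Vert n)).getLast?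
          = some (p[i+2]'hi2) by simp) hhead hlast hfin hshort
      have hcost3 : walkCost (wCost ε n) [p[i]'hia, p[i+1]'hib, p[i+2]'hi2]
          = Wt ε 0 + (Wt ε 0 + 0) := by
        rw [walkCost_cons₂, walkCost_cons₂, hE1, hE2]
        simp
      have hle0 : Wt ε 0 + (Wt ε 0 + 0) ≤ 0 := by
        rw [← hcost3, hsub.2, hac]
        exact spDist_self_le _ _
      have h00 := le_zero_iff.1 hle0
      exact Wt_ne_zero hε0 0 (add_eq_zero.1 h00).1
    rw [Finset.card_le_one]
    intro i₁ h₁ i₂ h₂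
    rw [Finset.mem_filter, Finset.mem_range] at h₁ h₂
    rcases lt_trichotomy i₁ i₂ with hlt | heq | hlt
    · exact absurd (bt i₁ i₂ hlt h₂.1 h₁.2 h₂.2) not_false
    · exact heq
    · exact absurd (bt i₂ i₁ hlt h₁.1 h₂.2 h₁.2) not_false
  · -- two edges of the maximal length are adjacent
    intro t i j hij hjlen hwi hwj hmaxt
    exact key t hmaxt i j hij hjlen hwi hwj

end Stmt
end
end

section
/- Let ε ∈ (0,1/2) and n ∈ ℕ. For every m with 1 ≤ m ≤ n, the weighted diamond W_n contains a set of 2^m vertices whose pairwise distances in d_{W_n} are all equal to 2(1/2+ε)^m; that is, W_n contains equilateral subsets of sizes 2^m for all m ≤ n. -/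
noncomputable section

open scoped ENNReal Classical

namespace Stmt

/-! ### Auxiliary development -/

/-- Midpoint data of generation `n+1`. -/
abbrev Emid (n : ℕ) := {e : Vert n × Vert n // dEdge n e.1 e.2}

lemma vert_succ (n : ℕ) : Vert (n + 1) = (Vert n ⊕ (Emid n × Bool)) := rfl

lemma dEdge_succ_iff (n : ℕ) (u v : Vert (n + 1)) :
    dEdge (n + 1) u v ↔ ∃ (e : Emid n) (b : Bool),
      (u = Sum.inl e.1.1 ∧ v = Sum.inr (e, b)) ∨
      (u = Sum.inr (e, b) ∧ v = Sum.inl e.1.2) := Iff.rfl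

lemma edgeAt_succ_iff (n k : ℕ) (u v : Vert (n + 1)) :
    edgeAt (n + 1) k u v ↔ (k = n + 1 ∧ dEdge (n + 1) u v) ∨
      (∃ u' v' : Vert n, u = Sum.inl u' ∧ v = Sum.inl v' ∧ edgeAt n k u' v') := Iff.rfl

lemma dEdge_edgeAt : ∀ (n : ℕ) (u v : Vert n), dEdge n u v → edgeAt n n u v
  | 0, _, _, h => ⟨rfl, h⟩
  | n + 1, _, _, h => Or.inl ⟨rfl, h⟩

lemma edgeAt_inl {n k : ℕ} {u v : Vert n} (h : edgeAt n k u v) :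
    edgeAt (n + 1) k (Sum.inl u) (Sum.inl v) := Or.inr ⟨u, v, rfl, rfl, h⟩

/-- The base vertex of each generation. -/
def bV : (k : ℕ) → Vert k
  | 0 => (0 : Fin 2)
  | k + 1 => Sum.inl (bV k)

/-- The canonical inclusion `Vert m → Vert (m + j)`. -/
def ι (m : ℕ) : (j : ℕ) → Vert m → Vert (m + j)
  | 0 => id
  | j + 1 => fun x => Sum.inl (ι m j x)

lemma ι_injective (m j : ℕ) : Function.Injective (ι m j) := by
  induction j with
  | zero => exact fun _ _ h => h
  | succ j ih => exact fun a b h => ih (Sum.inl_injective h)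

lemma edgeAt_ι {m k : ℕ} (j : ℕ) {u v : Vert m} (h : edgeAt m k u v) :
    edgeAt (m + j) k (ι m j u) (ι m j v) := by
  induction j with
  | zero => exact h
  | succ j ih => exact edgeAt_inl ih

/-- The `2^k` oriented edges of generation `k` incident to the base vertex. -/
def ed : (k : ℕ) → (Fin k → Bool) → Emid k
  | 0 => fun _ => ⟨((0 : Fin 2), (1 : Fin 2)), ⟨rfl, rfl⟩⟩
  | k + 1 => fun σ =>
      if h : (ed k (σ ∘ Fin.succ)).1.1 = bV k then
        ⟨(Sum.inl (ed k (σ ∘ Fin.succ)).1.1, Sum.inr (ed k (σ ∘ Fin.succ), σ 0)),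
          ⟨ed k (σ ∘ Fin.succ), σ 0, Or.inl ⟨rfl, rfl⟩⟩⟩
      else
        ⟨(Sum.inr (ed k (σ ∘ Fin.succ), σ 0), Sum.inl (ed k (σ ∘ Fin.succ)).1.2),
          ⟨ed k (σ ∘ Fin.succ), σ 0, Or.inr ⟨rfl, rfl⟩⟩⟩

lemma ed_endpoint : ∀ (k : ℕ) (σ : Fin k → Bool),
    (ed k σ).1.1 = bV k ∨ (ed k σ).1.2 = bV k
  | 0, _ => Or.inl rfl
  | k + 1, σ => by
      by_cases h : (ed k (σ ∘ Fin.succ)).1.1 = bV k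
      · left
        simp only [ed, dif_pos h]
        exact congrArg Sum.inl h
      · right
        simp only [ed, dif_neg h]
        rcases ed_endpoint k (σ ∘ Fin.succ) with h' | h'
        · exact absurd h' h
        · exact congrArg Sum.inl h'

lemma ed_injective : ∀ k : ℕ, Function.Injective (ed k)
  | 0 => fun σ τ _ => funext fun i => i.elim0
  | k + 1 => by
      intro σ τ h
      simp only [ed] at h
      have key : (ed k (σ ∘ Fin.succ), σ 0) = (ed k (τ ∘ Fin.succ), τ 0) := by
        by_cases h1 : (ed k (σ ∘ Fin.succ)).1.1 = bV k <;>
          by_cases h2 : (ed k (τ ∘ Fin.succ)).1.1 = bV k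
        · rw [dif_pos h1, dif_pos h2] at h
          exact Sum.inr_injective (congrArg (fun z => z.1.2) h)
        · rw [dif_pos h1, dif_neg h2] at h
          exact (Sum.inl_ne_inr (congrArg (fun z => z.1.1) h)).elim
        · rw [dif_neg h1, dif_pos h2] at h
          exact (Sum.inl_ne_inr (congrArg (fun z => z.1.1) h).symm).elim
        · rw [dif_neg h1, dif_neg h2] at h
          exact Sum.inr_injective (congrArg (fun z => z.1.1) h)
      have h0 : σ 0 = τ 0 := congrArg Prod.snd key
      have hs : σ ∘ Fin.succ = τ ∘ Fin.succ := ed_injective k (congrArg Prod.fst key)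
      funext i
      refine Fin.cases h0 (fun i => ?_) i
      exact congrFun hs i

/-- The invariant: `φ` is compatible with all edge weights (with `s = 1/2 + ε`). -/
def Inv (ε : ℝ) (n : ℕ) (φ : Vert n → ℝ) : Prop :=
  ∀ k (u v : Vert n), edgeAt n k u v → |φ u - φ v| ≤ (1 / 2 + ε) ^ k

/-- The basic potential: `-s^(n+1)` at `Sum.inr P`, `s^(n+1)` at `Sum.inr Q`, `0` elsewhere. -/
def indFn (ε : ℝ) (n : ℕ) (P Q : Emid n × Bool) : Vert (n + 1) → ℝ :=
  fun x => if x = Sum.inr P then -((1 / 2 + ε) ^ (n + 1))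
    else if x = Sum.inr Q then (1 / 2 + ε) ^ (n + 1) else 0

lemma indFn_inl (ε : ℝ) (n : ℕ) (P Q : Emid n × Bool) (w : Vert n) :
    indFn ε n P Q (Sum.inl w) = 0 := by
  unfold indFn
  exact (if_neg Sum.inl_ne_inr).trans (if_neg Sum.inl_ne_inr)

lemma indFn_P (ε : ℝ) (n : ℕ) (P Q : Emid n × Bool) :
    indFn ε n P Q (Sum.inr P) = -((1 / 2 + ε) ^ (n + 1)) := if_pos rfl

lemma indFn_Q (ε : ℝ) (n : ℕ) {P Q : Emid n × Bool} (h : P ≠ Q) :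
    indFn ε n P Q (Sum.inr Q) = (1 / 2 + ε) ^ (n + 1) := by
  unfold indFn
  exact (if_neg (fun hh => h (Sum.inr_injective hh).symm)).trans (if_pos rfl)

lemma indFn_abs {ε : ℝ} (hε0 : 0 < ε) (n : ℕ) (P Q : Emid n × Bool) (x : Vert (n + 1)) :
    |indFn ε n P Q x| ≤ (1 / 2 + ε) ^ (n + 1) := by
  have hp : (0 : ℝ) < (1 / 2 + ε) ^ (n + 1) := pow_pos (by linarith) _
  unfold indFn
  split_ifs
  · rw [abs_neg, abs_of_pos hp]
  · rw [abs_of_pos hp]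
  · simpa using hp.le

lemma Inv_indFn {ε : ℝ} (hε0 : 0 < ε) (n : ℕ) (P Q : Emid n × Bool) :
    Inv ε (n + 1) (indFn ε n P Q) := by
  intro k u v hedge
  rcases hedge with ⟨rfl, hd⟩ | ⟨u', v', rfl, rfl, _⟩
  · rcases hd with ⟨e, b, ⟨rfl, rfl⟩ | ⟨rfl, rfl⟩⟩
    · erw [indFn_inl]
      simpa using indFn_abs hε0 n P Q (Sum.inr (e, b))
    · erw [indFn_inl]
      simpa [abs_sub_comm] using indFn_abs hε0 n P Q (Sum.inr (e, b))
  · erw [indFn_inl, indFn_inl]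
    simpa using (pow_pos (by linarith : (0:ℝ) < 1 / 2 + ε) k).le

/-- Extension of a potential by midpoint-averaging. -/
def extφ {n : ℕ} (φ : Vert n → ℝ) : Vert (n + 1) → ℝ :=
  Sum.elim φ (fun eb => (φ eb.1.1.1 + φ eb.1.1.2) / 2)

lemma Inv_ext {ε : ℝ} (hε0 : 0 < ε) {n : ℕ} {φ : Vert n → ℝ} (h : Inv ε n φ) :
    Inv ε (n + 1) (extφ φ) := by
  intro k u v hedge
  rcases hedge with ⟨rfl, hd⟩ | ⟨u', v', rfl, rfl, he⟩
  · rcases hd with ⟨e, b, ⟨rfl, rfl⟩ | ⟨rfl, rfl⟩⟩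
    · have hb : |φ e.1.1 - φ e.1.2| ≤ (1 / 2 + ε) ^ n :=
        h n e.1.1 e.1.2 (dEdge_edgeAt n e.1.1 e.1.2 e.2)
      have : extφ φ (Sum.inl e.1.1) - extφ φ (Sum.inr (e, b))
          = (φ e.1.1 - φ e.1.2) / 2 := by
        show φ e.1.1 - (φ e.1.1 + φ e.1.2) / 2 = _; ring
      rw [this, abs_div, pow_succ]
      rw [abs_of_pos (by norm_num : (0:ℝ) < 2)]
      have hs : (1:ℝ) / 2 ≤ 1 / 2 + ε := by linarith
      have hp : (0:ℝ) ≤ (1 / 2 + ε) ^ n := by positivity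
      nlinarith
    · have hb : |φ e.1.1 - φ e.1.2| ≤ (1 / 2 + ε) ^ n :=
        h n e.1.1 e.1.2 (dEdge_edgeAt n e.1.1 e.1.2 e.2)
      have : extφ φ (Sum.inr (e, b)) - extφ φ (Sum.inl e.1.2)
          = (φ e.1.1 - φ e.1.2) / 2 := by
        show (φ e.1.1 + φ e.1.2) / 2 - φ e.1.2 = _; ring
      rw [this, abs_div, pow_succ]
      rw [abs_of_pos (by norm_num : (0:ℝ) < 2)]
      have hs : (1:ℝ) / 2 ≤ 1 / 2 + ε := by linarith
      have hp : (0:ℝ) ≤ (1 / 2 + ε) ^ n := by positivity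
      nlinarith
  · exact h k u' v' he

/-- Iterated extension of a potential. -/
def Φ {m : ℕ} (φ : Vert m → ℝ) : (j : ℕ) → Vert (m + j) → ℝ
  | 0 => φ
  | j + 1 => extφ (Φ φ j)

lemma Φ_ι {m : ℕ} (φ : Vert m → ℝ) (j : ℕ) (x : Vert m) : Φ φ j (ι m j x) = φ x := by
  induction j with
  | zero => rfl
  | succ j ih => exact ih

lemma Inv_Φ {ε : ℝ} (hε0 : 0 < ε) {m : ℕ} {φ : Vert m → ℝ} (h : Inv ε m φ) (j : ℕ) :
    Inv ε (m + j) (Φ φ j) := by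
  induction j with
  | zero => exact h
  | succ j ih => exact Inv_ext hε0 ih

lemma abs_le_wCost {ε : ℝ} {n : ℕ} {φ : Vert n → ℝ} (h : Inv ε n φ) (u v : Vert n) :
    ENNReal.ofReal (|φ u - φ v|) ≤ wCost ε n u v := by
  refine le_iInf fun k => le_iInf fun hk => ENNReal.ofReal_le_ofReal ?_
  rcases hk with hk | hk
  · exact h k u v hk
  · rw [abs_sub_comm]; exact h k v u hk

lemma walk_lb {V : Type*} {c : V → V → ℝ≥0∞} {φ : V → ℝ}
    (h : ∀ x y, ENNReal.ofReal (|φ x - φ y|) ≤ c x y) :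
    ∀ (l : List V) (u v : V), l.head? = some u → l.getLast? = some v →
      ENNReal.ofReal (|φ u - φ v|) ≤ walkCost c l := by
  intro l
  induction l with
  | nil => intro u v hu _; simp at hu
  | cons x l ih =>
    intro u v hu hv
    have hux : u = x := by simpa using hu.symm
    subst hux
    match l, hv with
    | [], hv =>
      have : v = u := by simpa using hv.symm
      subst this
      simp [walkCost]
    | y :: l, hv =>
      have hv' : (y :: l).getLast? = some v := by
        simpa [List.getLast?_cons_cons] using hv
      have h1 := ih y v rfl hv'
      calc ENNReal.ofReal (|φ u - φ v|)
          ≤ ENNReal.ofReal (|φ u - φ y| + |φ y - φ v|) :=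
            ENNReal.ofReal_le_ofReal (abs_sub_le _ _ _)
        _ ≤ ENNReal.ofReal (|φ u - φ y|) + ENNReal.ofReal (|φ y - φ v|) :=
            ENNReal.ofReal_add_le
        _ ≤ c u y + walkCost c (y :: l) := add_le_add (h u y) h1
        _ = walkCost c (u :: y :: l) := rfl

lemma spDist_lb {V : Type*} {c : V → V → ℝ≥0∞} {φ : V → ℝ}
    (h : ∀ x y, ENNReal.ofReal (|φ x - φ y|) ≤ c x y) (u v : V) :
    ENNReal.ofReal (|φ u - φ v|) ≤ spDist c u v :=
  le_iInf fun p => walk_lb h p.1 u v p.2.1 p.2.2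

lemma spDist_ub {V : Type*} (c : V → V → ℝ≥0∞) (u w v : V) :
    spDist c u v ≤ c u w + c w v := by
  have : spDist c u v ≤ walkCost c [u, w, v] :=
    iInf_le _ (⟨[u, w, v], by simp, by simp⟩ :
      { l : List V // l.head? = some u ∧ l.getLast? = some v })
  simpa [walkCost] using this

lemma wCost_le {ε : ℝ} {n k : ℕ} {u v : Vert n}
    (h : edgeAt n k u v ∨ edgeAt n k v u) :
    wCost ε n u v ≤ ENNReal.ofReal ((1 / 2 + ε) ^ k) :=
  iInf_le_of_le k (iInf_le _ h)

/-- For every `1 ≤ m ≤ n`, the weighted diamond `W n` contains an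
equilateral subset of size `2^m`, with all pairwise distances equal to `2*(1/2+ε)^m`. -/
theorem statement10 (ε : ℝ) (hε0 : 0 < ε) (hε : ε < 1 / 2) (n m : ℕ)
    (hm1 : 1 ≤ m) (hmn : m ≤ n) :
    ∃ S : Set (Vert n), S.ncard = 2 ^ m ∧
      S.Pairwise (fun u v => dW ε n u v = 2 * (1 / 2 + ε) ^ m) := by
  obtain ⟨m', rfl⟩ : ∃ m', m = m' + 1 := ⟨m - 1, by omega⟩
  obtain ⟨j, rfl⟩ := Nat.exists_eq_add_of_le hmn
  have hs0 : (0:ℝ) < 1 / 2 + ε := by linarith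
  have hsm : (0:ℝ) < (1 / 2 + ε) ^ (m' + 1) := pow_pos hs0 _
  set p : ((Fin m' → Bool) × Bool) → Vert (m' + 1) :=
    fun σ => Sum.inr (ed m' σ.1, σ.2) with hp_def
  have hp_inj : Function.Injective p := by
    intro σ τ h
    have := Sum.inr_injective h
    replace this := Prod.mk.inj this
    exact Prod.ext (ed_injective m' this.1) this.2
  set f : ((Fin m' → Bool) × Bool) → Vert (m' + 1 + j) :=
    fun σ => ι (m' + 1) j (p σ) with hf_def
  have hf_inj : Function.Injective f := (ι_injective (m' + 1) j).comp hp_inj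
  refine ⟨Set.range f, ?_, ?_⟩
  · rw [← Nat.card_coe_set_eq, Nat.card_range_of_injective hf_inj]
    simp [Nat.card_eq_fintype_card, pow_succ, mul_comm]
  · rintro u ⟨σ, rfl⟩ v ⟨τ, rfl⟩ hne
    have hστ : σ ≠ τ := fun h => hne (by rw [h])
    -- upper bound via the hub
    have hub_edge : ∀ ρ, wCost ε (m' + 1 + j) (f ρ) (ι (m' + 1) j (bV (m' + 1)))
        ≤ ENNReal.ofReal ((1 / 2 + ε) ^ (m' + 1)) := by
      intro ρ
      have hor : edgeAt (m' + 1) (m' + 1) (bV (m' + 1)) (p ρ) ∨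
          edgeAt (m' + 1) (m' + 1) (p ρ) (bV (m' + 1)) := by
        rcases ed_endpoint m' ρ.1 with h | h
        · exact Or.inl (dEdge_edgeAt _ _ _
            ⟨ed m' ρ.1, ρ.2, Or.inl ⟨by rw [h]; rfl, rfl⟩⟩)
        · exact Or.inr (dEdge_edgeAt _ _ _
            ⟨ed m' ρ.1, ρ.2, Or.inr ⟨rfl, by rw [h]; rfl⟩⟩)
      rcases hor with h | h
      · exact wCost_le (Or.inr (edgeAt_ι j h))
      · exact wCost_le (Or.inl (edgeAt_ι j h))
    have hub_edge' : ∀ ρ, wCost ε (m' + 1 + j) (ι (m' + 1) j (bV (m' + 1))) (f ρ)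
        ≤ ENNReal.ofReal ((1 / 2 + ε) ^ (m' + 1)) := by
      intro ρ
      refine le_trans (le_of_eq ?_) (hub_edge ρ)
      unfold wCost
      exact iInf_congr fun k => by rw [or_comm]
    have hub : spDist (wCost ε (m' + 1 + j)) (f σ) (f τ)
        ≤ ENNReal.ofReal (2 * (1 / 2 + ε) ^ (m' + 1)) := by
      calc spDist (wCost ε (m' + 1 + j)) (f σ) (f τ)
          ≤ wCost ε (m' + 1 + j) (f σ) (ι (m' + 1) j (bV (m' + 1))) +
            wCost ε (m' + 1 + j) (ι (m' + 1) j (bV (m' + 1))) (f τ) :=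
            spDist_ub _ _ _ _
        _ ≤ ENNReal.ofReal ((1 / 2 + ε) ^ (m' + 1)) +
            ENNReal.ofReal ((1 / 2 + ε) ^ (m' + 1)) :=
            add_le_add (hub_edge σ) (hub_edge' τ)
        _ = ENNReal.ofReal (2 * (1 / 2 + ε) ^ (m' + 1)) := by
            rw [← ENNReal.ofReal_add hsm.le hsm.le]; ring_nf
    -- lower bound via the potential
    have hPQ : (ed m' σ.1, σ.2) ≠ (ed m' τ.1, τ.2) := by
      intro h
      rw [Prod.mk.injEq] at h
      exact hστ (Prod.ext (ed_injective m' h.1) h.2)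
    set φ0 : Vert (m' + 1) → ℝ := indFn ε m' (ed m' σ.1, σ.2) (ed m' τ.1, τ.2)
      with hφ0_def
    have hInv : Inv ε (m' + 1 + j) (Φ φ0 j) :=
      Inv_Φ hε0 (Inv_indFn hε0 m' _ _) j
    have hfσ : Φ φ0 j (f σ) = -((1 / 2 + ε) ^ (m' + 1)) := by
      show Φ φ0 j (ι (m' + 1) j (p σ)) = _
      rw [Φ_ι]
      exact indFn_P ε m' _ _
    have hfτ : Φ φ0 j (f τ) = (1 / 2 + ε) ^ (m' + 1) := by
      show Φ φ0 j (ι (m' + 1) j (p τ)) = _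
      rw [Φ_ι]
      exact indFn_Q ε m' hPQ
    have hval : |Φ φ0 j (f σ) - Φ φ0 j (f τ)| = 2 * (1 / 2 + ε) ^ (m' + 1) := by
      rw [hfσ, hfτ, abs_of_nonpos (by linarith)]
      ring
    have hlb : ENNReal.ofReal (2 * (1 / 2 + ε) ^ (m' + 1))
        ≤ spDist (wCost ε (m' + 1 + j)) (f σ) (f τ) := by
      have := spDist_lb (fun x y => abs_le_wCost hInv x y) (f σ) (f τ)
      rwa [hval] at this
    have heq : spDist (wCost ε (m' + 1 + j)) (f σ) (f τ)
        = ENNReal.ofReal (2 * (1 / 2 + ε) ^ (m' + 1)) := le_antisymm hub hlb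
    show dW ε (m' + 1 + j) (f σ) (f τ) = _
    rw [dW, heq, ENNReal.toReal_ofReal (by positivity)]

end Stmt
end
end
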